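/- Any nil subring of the n×n matrix algebra over a field is nilpotent of nilpotence index at most n. -/

import Mathlib

open Module LinearMap

universe u v

section Aux

variable {K : Type u} [Field K]

private lemma restrict_pow_coe {V : Type v} [AddCommGroup V] [Module K V]
    (p : Submodule K V) (f : Module.End K V) (h : ∀ x ∈ p, f x ∈ p) :
    ∀ (k : ℕ) (x : p), (((f.restrict h) ^ k) x : V) = (f ^ k) (x : V) := by
  intro k
  induction k with
  | zero => intro x; simp
  | succ k ih =>
    intro x
    simp only [pow_succ, Module.End.mul_apply]
    rw [ih, LinearMap.restrict_coe_apply]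

private lemma common_kernel (k : ℕ) :
    ∀ (V : Type v) [AddCommGroup V] [Module K V] [FiniteDimensional K V],
      Nontrivial V → finrank K V ≤ k →
      ∀ S : Set (Module.End K V),
        (∀ f ∈ S, ∀ g ∈ S, f * g ∈ S) → (∀ f ∈ S, IsNilpotent f) →
        ∃ v : V, v ≠ 0 ∧ ∀ f ∈ S, f v = 0 := by
  induction k with
  | zero =>
    intro V _ _ _ hV hdim S _ _
    have : 0 < finrank K V := Module.finrank_pos
    omega
  | succ k ih =>
    intro V _ _ _ hV hdim S hmul hnil
    by_cases hS0 : ∀ f ∈ S, f = 0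
    · obtain ⟨v, hv⟩ := exists_ne (0 : V)
      exact ⟨v, hv, fun f hf => by rw [hS0 f hf]; rfl⟩
    push_neg at hS0
    obtain ⟨a₀, ha₀S, ha₀⟩ := hS0
    have hTne : {m | ∃ f, f ∈ S ∧ f ≠ 0 ∧ finrank K (LinearMap.range f) = m}.Nonempty :=
      ⟨_, a₀, ha₀S, ha₀, rfl⟩
    obtain ⟨a, haS, ha0, har⟩ := Nat.sInf_mem hTne
    have hmin : ∀ b, b ∈ S → b ≠ 0 →
        finrank K (LinearMap.range a) ≤ finrank K (LinearMap.range b) := by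
      intro b hb hb0
      rw [har]
      exact Nat.sInf_le ⟨b, hb, hb0, rfl⟩
    -- helper: no nilpotent element of S can map range a onto range a
    have helper : ∀ c ∈ S, LinearMap.range (c ∘ₗ a) = LinearMap.range a → False := by
      intro c hcS hrange
      have hUnt : Nontrivial (LinearMap.range a) :=
        Submodule.nontrivial_iff_ne_bot.mpr (fun h => ha0 (LinearMap.range_eq_bot.mp h))
      have hmaps : ∀ x ∈ LinearMap.range a, c x ∈ LinearMap.range a := by
        rintro x ⟨w, rfl⟩
        rw [← hrange]
        exact ⟨w, rfl⟩
      have hsurj : Function.Surjective (c.restrict hmaps) := by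
        rintro ⟨u, hu⟩
        rw [← hrange] at hu
        obtain ⟨w, hw⟩ := hu
        refine ⟨⟨a w, ⟨w, rfl⟩⟩, ?_⟩
        apply Subtype.ext
        rw [LinearMap.restrict_coe_apply]
        exact hw
      obtain ⟨m, hm⟩ := hnil c hcS
      have hcm : (c.restrict hmaps) ^ m = 0 := by
        ext x
        have h3 := restrict_pow_coe (LinearMap.range a) c hmaps m x
        rw [hm] at h3
        simpa using h3
      have hsm : Function.Surjective ((c.restrict hmaps) ^ m) := by
        have : ⇑((c.restrict hmaps) ^ m) = (⇑(c.restrict hmaps))^[m] :=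
          funext fun x => Module.End.pow_apply _ m x
        rw [this]
        exact hsurj.iterate m
      obtain ⟨u, hu⟩ := exists_ne (0 : LinearMap.range a)
      obtain ⟨x, hx⟩ := hsm u
      rw [hcm] at hx
      simp at hx
      exact hu hx.symm
    -- minimal rank forces range equality
    have key : ∀ c, c ∈ S → c ≠ 0 → LinearMap.range c ≤ LinearMap.range a →
        LinearMap.range c = LinearMap.range a := by
      intro c hc hc0 hle
      exact Submodule.eq_of_le_of_finrank_le hle (hmin c hc hc0)
    have claim1 : a * a = 0 := by
      by_contra h
      apply helper a haS
      rw [← Module.End.mul_eq_comp]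
      apply key (a * a) (hmul a haS a haS) h
      rintro x ⟨w, rfl⟩
      exact ⟨a w, rfl⟩
    have claim2 : ∀ b ∈ S, a * b * a = 0 := by
      intro b hbS
      by_contra h
      apply helper (a * b) (hmul a haS b hbS)
      rw [← Module.End.mul_eq_comp]
      apply key (a * b * a) (hmul _ (hmul a haS b hbS) a haS) h
      rintro x ⟨w, rfl⟩
      exact ⟨(b * a) w, by rw [mul_assoc]; rfl⟩
    -- the invariant subspace
    set G : Set V := {w | ∃ b ∈ S, ∃ x : V, (b * a) x = w} ∪ Set.range a with hG
    set W : Submodule K V := Submodule.span K G with hWdef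
    have hmem1 : ∀ b ∈ S, ∀ x : V, (b * a) x ∈ W :=
      fun b hb x => Submodule.subset_span (Or.inl ⟨b, hb, x, rfl⟩)
    have hmem2 : ∀ x : V, a x ∈ W := fun x => Submodule.subset_span (Or.inr ⟨x, rfl⟩)
    have hinv : ∀ f ∈ S, ∀ w ∈ W, f w ∈ W := by
      intro f hf w hw
      induction hw using Submodule.span_induction with
      | mem x hx =>
        rcases hx with ⟨b, hb, x, rfl⟩ | ⟨x, rfl⟩
        · have : f ((b * a) x) = ((f * b) * a) x := by
            rw [← Module.End.mul_apply, ← mul_assoc]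
          rw [this]
          exact hmem1 _ (hmul f hf b hb) x
        · have : f (a x) = (f * a) x := rfl
          rw [this]
          exact hmem1 f hf x
      | zero => rw [map_zero]; exact W.zero_mem
      | add x y _ _ hx hy => rw [map_add]; exact W.add_mem hx hy
      | smul c x _ hx => rw [map_smul]; exact W.smul_mem c hx
    have haW : ∀ w ∈ W, a w = 0 := by
      intro w hw
      induction hw using Submodule.span_induction with
      | mem x hx =>
        rcases hx with ⟨b, hb, x, rfl⟩ | ⟨x, rfl⟩
        · have : a ((b * a) x) = ((a * b) * a) x := by
            rw [← Module.End.mul_apply, ← mul_assoc]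
          rw [this, claim2 b hb]
          rfl
        · have : a (a x) = (a * a) x := rfl
          rw [this, claim1]
          rfl
      | zero => exact map_zero a
      | add x y _ _ hx hy => rw [map_add, hx, hy, add_zero]
      | smul c x _ hx => rw [map_smul, hx, smul_zero]
    have hWne : W ≠ ⊤ := by
      intro h
      apply ha0
      ext v
      exact haW v (h ▸ Submodule.mem_top)
    have hWbot : W ≠ ⊥ := by
      intro h
      apply ha0
      ext v
      have := hmem2 v
      rw [h, Submodule.mem_bot] at this
      exact this
    haveI hWnt : Nontrivial W := Submodule.nontrivial_iff_ne_bot.mpr hWbot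
    have hWdim : finrank K W ≤ k := by
      have := Submodule.finrank_lt hWne
      omega
    set S' : Set (Module.End K W) :=
      {g | ∃ f, ∃ hf : f ∈ S, g = f.restrict (fun x hx => hinv f hf x hx)} with hS'
    have hmul' : ∀ g₁ ∈ S', ∀ g₂ ∈ S', g₁ * g₂ ∈ S' := by
      rintro _ ⟨f₁, hf₁, rfl⟩ _ ⟨f₂, hf₂, rfl⟩
      refine ⟨f₁ * f₂, hmul f₁ hf₁ f₂ hf₂, ?_⟩
      ext x
      simp [Module.End.mul_apply, LinearMap.restrict_coe_apply]
    have hnil' : ∀ g ∈ S', IsNilpotent g := by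
      rintro _ ⟨f, hf, rfl⟩
      obtain ⟨m, hm⟩ := hnil f hf
      refine ⟨m, ?_⟩
      ext x
      have h3 := restrict_pow_coe W f (fun x hx => hinv f hf x hx) m x
      rw [hm] at h3
      simpa using h3
    obtain ⟨v, hv0, hv⟩ := ih W hWnt hWdim S' hmul' hnil'
    refine ⟨(v : V), ?_, ?_⟩
    · intro h
      exact hv0 (Subtype.ext h)
    · intro f hf
      have := hv (f.restrict (fun x hx => hinv f hf x hx)) ⟨f, hf, rfl⟩
      have h2 := congrArg (Subtype.val) (this)
      rwa [LinearMap.restrict_coe_apply] at h2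

private lemma prod_eq_zero {V : Type v} [AddCommGroup V] [Module K V] [FiniteDimensional K V]
    (S : Set (Module.End K V))
    (hmul : ∀ f ∈ S, ∀ g ∈ S, f * g ∈ S) (hnil : ∀ f ∈ S, IsNilpotent f) :
    ∀ l : List (Module.End K V), (∀ f ∈ l, f ∈ S) → finrank K V ≤ l.length →
      l.prod = 0 := by
  classical
  set C : ℕ → Submodule K V := fun j => Nat.rec ⊥ (fun _ p => ⨅ f ∈ S, p.comap f) j with hC
  have hmemsucc : ∀ j (v : V), v ∈ C (j + 1) ↔ ∀ f ∈ S, f v ∈ C j := by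
    intro j v
    show v ∈ ⨅ f ∈ S, (C j).comap f ↔ _
    simp [Submodule.mem_iInf]
  have hmono : ∀ j, C j ≤ C (j + 1) := by
    intro j
    induction j with
    | zero => exact bot_le
    | succ j ihm =>
      intro v hv
      exact (hmemsucc (j + 1) v).mpr fun f hf => ihm ((hmemsucc j v).mp hv f hf)
  have hinvC : ∀ j f, f ∈ S → ∀ v ∈ C j, f v ∈ C j := by
    intro j
    match j with
    | 0 =>
      intro f hf v hv
      have hv' : v ∈ (⊥ : Submodule K V) := hv
      rw [Submodule.mem_bot] at hv'
      subst hv'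
      have : f 0 ∈ (⊥ : Submodule K V) := by simp
      exact this
    | (j + 1) =>
      intro f hf v hv
      exact hmono j ((hmemsucc j v).mp hv f hf)
  have step : ∀ j, C j ≠ ⊤ → ∃ v, v ∈ C (j + 1) ∧ v ∉ C j := by
    intro j hj
    haveI := Submodule.Quotient.nontrivial_iff.mpr hj
    have hcomap : ∀ f, f ∈ S → C j ≤ (C j).comap f := fun f hf v hv => hinvC j f hf v hv
    set S' : Set (Module.End K (V ⧸ C j)) :=
      {g | ∃ f, ∃ hf : f ∈ S, g = (C j).mapQ (C j) f (hcomap f hf)} with hS'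
    have hmul' : ∀ g₁ ∈ S', ∀ g₂ ∈ S', g₁ * g₂ ∈ S' := by
      rintro _ ⟨f₁, hf₁, rfl⟩ _ ⟨f₂, hf₂, rfl⟩
      refine ⟨f₁ * f₂, hmul f₁ hf₁ f₂ hf₂, ?_⟩
      apply Submodule.linearMap_qext
      ext v
      simp [Submodule.mapQ_apply, Module.End.mul_apply]
    have hpowQ : ∀ f (hf : f ∈ S) (m : ℕ) (v : V),
        (((C j).mapQ (C j) f (hcomap f hf)) ^ m) (Submodule.Quotient.mk v) =
          Submodule.Quotient.mk ((f ^ m) v) := by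
      intro f hf m
      induction m with
      | zero => intro v; simp
      | succ m ihm =>
        intro v
        simp only [pow_succ, Module.End.mul_apply, Submodule.mapQ_apply]
        exact ihm (f v)
    have hnil' : ∀ g ∈ S', IsNilpotent g := by
      rintro _ ⟨f, hf, rfl⟩
      obtain ⟨m, hm⟩ := hnil f hf
      refine ⟨m, ?_⟩
      apply Submodule.linearMap_qext
      ext v
      simp [hpowQ f hf m v, hm]
    obtain ⟨vb, hvb0, hvb⟩ :=
      common_kernel (finrank K (V ⧸ C j)) (V ⧸ C j) inferInstance le_rfl S' hmul' hnil'
    obtain ⟨v, rfl⟩ := Submodule.mkQ_surjective (C j) vb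
    refine ⟨v, ?_, ?_⟩
    · rw [hmemsucc]
      intro f hf
      have := hvb ((C j).mapQ (C j) f (hcomap f hf)) ⟨f, hf, rfl⟩
      rw [Submodule.mkQ_apply, Submodule.mapQ_apply, Submodule.Quotient.mk_eq_zero] at this
      exact this
    · intro hvmem
      apply hvb0
      rw [Submodule.mkQ_apply, Submodule.Quotient.mk_eq_zero]
      exact hvmem
  have growth : ∀ j, C j = ⊤ ∨ j ≤ finrank K (C j) := by
    intro j
    induction j with
    | zero => exact Or.inr (Nat.zero_le _)
    | succ j ihg =>
      by_cases hj : C j = ⊤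
      · left
        exact eq_top_iff.mpr (hj ▸ hmono j)
      · rcases ihg with htop | hle
        · exact absurd htop hj
        · obtain ⟨v, hv1, hv2⟩ := step j hj
          have hlt : C j < C (j + 1) :=
            SetLike.lt_iff_le_and_exists.mpr ⟨hmono j, v, hv1, hv2⟩
          have := Submodule.finrank_lt_finrank_of_lt hlt
          right
          omega
  have htop : C (finrank K V) = ⊤ := by
    rcases growth (finrank K V) with h | h
    · exact h
    · exact Submodule.eq_top_of_finrank_eq (le_antisymm (Submodule.finrank_le _) h)
  have hmono' : Monotone C := monotone_nat_of_le_succ hmono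
  have prodmem : ∀ l : List (Module.End K V), (∀ f ∈ l, f ∈ S) →
      ∀ j (v : V), v ∈ C (l.length + j) → l.prod v ∈ C j := by
    intro l
    induction l with
    | nil =>
      intro _ j v hv
      simpa using hv
    | cons f t iht =>
      intro hmem j v hv
      rw [List.prod_cons, Module.End.mul_apply]
      have hlen : (f :: t).length + j = t.length + (j + 1) := by
        simp [List.length_cons]
        omega
      rw [hlen] at hv
      have := iht (fun g hg => hmem g (List.mem_cons_of_mem f hg)) (j + 1) v hv
      exact (hmemsucc j _).mp this f (hmem f (List.mem_cons_self (a := f) (l := t)))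
  intro l hl hlen
  ext v
  have hvtop : v ∈ C l.length := by
    have : (⊤ : Submodule K V) ≤ C l.length := htop ▸ hmono' hlen
    exact this Submodule.mem_top
  have h0 := prodmem l hl 0 v (by simpa using hvtop)
  have h1 : l.prod v ∈ (⊥ : Submodule K V) := h0
  rw [Submodule.mem_bot] at h1
  simpa using h1

end Aux

/-- Any nil subring `N` of the `n×n` matrix algebra over a field is nilpotent of
nilpotence index at most `n`: the product of any `n` elements of `N` is `0`. -/
theorem stmt_7 (K : Type*) [Field K] (n : ℕ)
    (N : NonUnitalSubring (Matrix (Fin n) (Fin n) K))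
    (hnil : ∀ a ∈ N, IsNilpotent a) :
    ∀ f : Fin n → Matrix (Fin n) (Fin n) K, (∀ i, f i ∈ N) → (List.ofFn f).prod = 0 := by
  intro f hf
  classical
  set e := Matrix.toLinAlgEquiv' (R := K) (n := Fin n) with he
  set S : Set (Module.End K (Fin n → K)) := (fun m => e m) '' (N : Set _) with hS
  have hmul : ∀ g₁ ∈ S, ∀ g₂ ∈ S, g₁ * g₂ ∈ S := by
    rintro _ ⟨x, hx, rfl⟩ _ ⟨y, hy, rfl⟩
    exact ⟨x * y, mul_mem hx hy, map_mul e x y⟩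
  have hnil' : ∀ g ∈ S, IsNilpotent g := by
    rintro _ ⟨x, hx, rfl⟩
    obtain ⟨m, hm⟩ := hnil x hx
    exact ⟨m, by rw [← map_pow, hm, map_zero]⟩
  have hmem : ∀ g ∈ (List.ofFn f).map e, g ∈ S := by
    intro g hg
    rw [List.mem_map] at hg
    obtain ⟨x, hx, rfl⟩ := hg
    rw [List.mem_ofFn] at hx
    obtain ⟨i, rfl⟩ := hx
    exact ⟨f i, hf i, rfl⟩
  have hlen : finrank K (Fin n → K) ≤ ((List.ofFn f).map e).length := by
    simp [Module.finrank_fin_fun]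
  have hzero := prod_eq_zero S hmul hnil' ((List.ofFn f).map e) hmem hlen
  have h2 : e (List.ofFn f).prod = 0 := by
    rw [map_list_prod]
    exact hzero
  apply e.injective
  rw [h2, map_zero]
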